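/- With l_1, l_2 as in Case 4 and setting γ̃ = γ + l_1 d - l_1 δ, ĩ = i + l_1 j - l_1 δ, d̃ = l_2^{-1} γ̃ + d, j̃ = l_2^{-1} ĩ + j, one has 0 ≤ γ̃ ≤ ĩ and d ≤ d̃ ≤ j̃ for every (i,j) with b_{ij} ≠ 0, provided T_k ≤ δ ≤ T_{k-1}. -/
import Mathlib


/-- In Case 4, with γ̃ = γ + l₁d - l₁δ, ĩ = i + l₁j - l₁δ,
d̃ = l₂⁻¹γ̃ + d and j̃ = l₂⁻¹ĩ + j, and the supporting-line properties of the
Newton polygon edges L_{k-1} (slope -l₁⁻¹) and L_k (slope -(l₁+l₂)⁻¹) through the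
vertex (γ,d), provided T_k ≤ δ ≤ T_{k-1} one has 0 ≤ γ̃ ≤ ĩ and d ≤ d̃ ≤ j̃ for every
(i,j) with b_{ij} ≠ 0. -/
theorem stmt7
    (S : Set (ℕ × ℕ)) (γ d δ : ℕ) (hδ : 2 ≤ δ)
    (l1 l2 : ℝ) (h1 : 0 < l1) (h2 : 0 < l2)
    (hsupp1 : ∀ p ∈ S, (γ : ℝ) + l1 * d ≤ (p.1 : ℝ) + l1 * p.2)
    (hsupp2 : ∀ p ∈ S, (γ : ℝ) + (l1 + l2) * d ≤ (p.1 : ℝ) + (l1 + l2) * p.2)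
    (hTk : (l1 + l2)⁻¹ * γ + d ≤ (δ : ℝ))
    (hTk1 : (δ : ℝ) ≤ l1⁻¹ * γ + d) :
    ∀ p ∈ S,
      0 ≤ (γ : ℝ) + l1 * d - l1 * δ ∧
      (γ : ℝ) + l1 * d - l1 * δ ≤ (p.1 : ℝ) + l1 * p.2 - l1 * δ ∧
      (d : ℝ) ≤ l2⁻¹ * ((γ : ℝ) + l1 * d - l1 * δ) + d ∧
      l2⁻¹ * ((γ : ℝ) + l1 * d - l1 * δ) + d ≤
        l2⁻¹ * ((p.1 : ℝ) + l1 * p.2 - l1 * δ) + p.2 := by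
  intro p hp
  have hs1 := hsupp1 p hp
  have hs2 := hsupp2 p hp
  have hg : 0 ≤ (γ : ℝ) + l1 * d - l1 * δ := by
    have := mul_le_mul_of_nonneg_left hTk1 h1.le
    rw [mul_add, ← mul_assoc, mul_inv_cancel₀ h1.ne', one_mul] at this
    linarith
  have key : l2⁻¹ * l2 = 1 := inv_mul_cancel₀ h2.ne'
  have hi : 0 ≤ l2⁻¹ := inv_nonneg.mpr h2.le
  exact ⟨hg, by linarith, by nlinarith, by nlinarith⟩
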